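/- Let 1 < m ≤ n − 2 and let B₁, B₂ be two distinct singleton subsets of [n]∖[m]. Set D = {x ∈ 𝔽₂ⁿ : supp(x) is not a down-closed subset of ℍ(m,n) contained in [m]∪B₁ or in [m]∪B₂}. Then the code C_D has length |D| = 2ⁿ − 2^m − 2, the map u ↦ c_{D,u} is injective (so C_D has 2ⁿ codewords and dimension n), the minimum weight of a nonzero codeword is d = 2^{n−1} − 2^{m−1} − 2, and Σ_{i=0}^{n−1} ⌈(d+1)/2^i⌉ > 2ⁿ − 2^m − 2; hence by the Griesmer bound no binary linear [2ⁿ − 2^m − 2, n] code has minimum distance exceeding d, i.e., C_D is distance-optimal. -/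

import Mathlib

open Finset

/-- The order relation of the hierarchical poset `ℍ(m,n)` on `Fin n`:
`i ⪯ j` iff `i = j`, or `i` lies in the bottom level `[m]` and `j` in the top level. -/
def Hle (n m : ℕ) (i j : Fin n) : Prop :=
  i = j ∨ ((i : ℕ) < m ∧ m ≤ (j : ℕ))

instance (n m : ℕ) : DecidableRel (Hle n m) := fun i j =>
  decidable_of_iff (i = j ∨ ((i : ℕ) < m ∧ m ≤ (j : ℕ))) Iff.rfl

/-- Down-closed subsets of the hierarchical poset `ℍ(m,n)`. -/
def HDownClosed (n m : ℕ) (S : Finset (Fin n)) : Prop :=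
  ∀ i j : Fin n, Hle n m i j → j ∈ S → i ∈ S

instance (n m : ℕ) : DecidablePred (HDownClosed n m) := fun S =>
  decidable_of_iff (∀ i j : Fin n, Hle n m i j → j ∈ S → i ∈ S) Iff.rfl

/-- The bottom level `[m]` of `ℍ(m,n)`, viewed inside `Fin n`. -/
def lowSet (n m : ℕ) : Finset (Fin n) :=
  Finset.univ.filter (fun i => (i : ℕ) < m)

/-- The support of a vector of `𝔽₂ⁿ`, as a subset of `[n]`. -/
def supp {n : ℕ} (x : Fin n → ZMod 2) : Finset (Fin n) :=
  Finset.univ.filter (fun i => x i ≠ 0)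

/-- The standard inner product on `𝔽₂ⁿ`. -/
def ip {n : ℕ} (u x : Fin n → ZMod 2) : ZMod 2 := ∑ i, u i * x i

/-- The Hamming weight of the codeword `c_{D,u} = (u·x)_{x ∈ D}`. -/
def wtD {n : ℕ} (D : Finset (Fin n → ZMod 2)) (u : Fin n → ZMod 2) : ℕ :=
  (D.filter (fun x => ip u x = 1)).card

/-- The Hamming weight of the codeword `c_f(s,u) = (s·f(x) + u·x)_{x ∈ 𝔽₂ⁿ ∖ {0}}`. -/
def wtF {n : ℕ} (f : (Fin n → ZMod 2) → ZMod 2) (s : ZMod 2) (u : Fin n → ZMod 2) : ℕ :=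
  (Finset.univ.filter (fun x : Fin n → ZMod 2 => x ≠ 0 ∧ s * f x + ip u x = 1)).card

/-- The Hamming weight of the first `m` coordinates of `u` (the part `v` of `u = (v,w)`). -/
def wtLow (n m : ℕ) (u : Fin n → ZMod 2) : ℕ :=
  (Finset.univ.filter (fun i : Fin n => (i : ℕ) < m ∧ u i ≠ 0)).card


section Aux
variable {n : ℕ}

theorem zmod2_ne_one {a : ZMod 2} (h : a ≠ 1) : a = 0 := by revert a; decide
theorem zmod2_ne_zero {a : ZMod 2} (h : a ≠ 0) : a = 1 := by revert a; decide
theorem zmod2_add_eq_zero {a b : ZMod 2} (h : a + b = 0) : a = b := by revert a b; decide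

theorem ip_addr (u x y : Fin n → ZMod 2) : ip u (x + y) = ip u x + ip u y := by
  simp [ip, mul_add, Finset.sum_add_distrib]

theorem ip_addl (u v x : Fin n → ZMod 2) : ip (u + v) x = ip u x + ip v x := by
  simp [ip, add_mul, Finset.sum_add_distrib]

theorem ip_single (u : Fin n → ZMod 2) (i₀ : Fin n) :
    ip u (fun j => if j = i₀ then 1 else 0) = u i₀ := by
  simp [ip, mul_ite]

theorem ip_single' (x : Fin n → ZMod 2) (i₀ : Fin n) :
    ip (fun j => if j = i₀ then 1 else 0) x = x i₀ := by
  simp [ip, ite_mul]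

theorem ip_zero (x : Fin n → ZMod 2) : ip 0 x = 0 := by simp [ip]

/-- Involution halving lemma. -/
theorem half_count (u : Fin n → ZMod 2) (i₀ : Fin n) (hu : u i₀ = 1)
    (P : Finset (Fin n → ZMod 2))
    (hP : ∀ x ∈ P, (x + fun j => if j = i₀ then 1 else 0) ∈ P) :
    2 * (P.filter (fun x => ip u x = 1)).card = P.card := by
  have inv : ∀ a : Fin n → ZMod 2,
      ((a + fun j => if j = i₀ then 1 else 0) + fun j => if j = i₀ then 1 else 0) = a := by
    intro a; funext j
    have h11 : (1 : ZMod 2) + 1 = 0 := rfl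
    by_cases h : j = i₀ <;> simp [h, add_assoc, h11]
  have key : (P.filter (fun x => ip u x = 1)).card
      = (P.filter (fun x => ¬ ip u x = 1)).card := by
    apply Finset.card_bij' (fun x _ => x + fun j => if j = i₀ then 1 else 0)
      (fun x _ => x + fun j => if j = i₀ then 1 else 0)
    · intro a _; exact inv a
    · intro a _; exact inv a
    · intro a ha
      simp only [mem_filter] at ha ⊢
      refine ⟨hP a ha.1, ?_⟩
      rw [ip_addr, ip_single, hu, ha.2]; decide
    · intro a ha
      simp only [mem_filter] at ha ⊢
      refine ⟨hP a ha.1, ?_⟩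
      rw [ip_addr, ip_single, hu]
      have h2 := ha.2
      revert h2; generalize ip u a = c; revert c; decide
  have := Finset.card_filter_add_card_filter_not (s := P) (p := fun x => ip u x = 1)
  omega

/-- indicator vector of a set -/
def ind (S : Finset (Fin n)) : Fin n → ZMod 2 := fun i => if i ∈ S then 1 else 0

theorem mem_supp {n : ℕ} (x : Fin n → ZMod 2) (i : Fin n) : i ∈ supp x ↔ x i ≠ 0 := by
  simp [supp]

theorem supp_ind (S : Finset (Fin n)) : supp (ind S) = S := by
  ext i; simp [supp, ind]

theorem eq_ind_supp (x : Fin n → ZMod 2) : x = ind (supp x) := by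
  funext i
  simp only [ind, supp, mem_filter, mem_univ, true_and]
  have : ∀ a : ZMod 2, a = if a ≠ 0 then 1 else 0 := by decide
  exact this (x i)

theorem lowSet_card {m : ℕ} (h : m ≤ n) : (lowSet n m).card = m := by
  rw [show lowSet n m = Finset.image (Fin.castLE h) univ from ?_]
  · rw [Finset.card_image_of_injective _ (Fin.castLE_injective h), card_univ, Fintype.card_fin]
  · ext j
    simp only [lowSet, mem_filter, mem_univ, true_and, Finset.mem_image]
    constructor
    · intro hj; exact ⟨⟨j, hj⟩, rfl⟩
    · rintro ⟨i, rfl⟩; exact i.isLt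

theorem charQ {m : ℕ} (b : Fin n) (hb : m ≤ (b : ℕ)) (x : Fin n → ZMod 2) :
    (HDownClosed n m (supp x) ∧ supp x ⊆ lowSet n m ∪ {b}) ↔
      (supp x ⊆ lowSet n m ∨ x = ind (lowSet n m ∪ {b})) := by
  constructor
  · rintro ⟨hdc, hsub⟩
    by_cases hbx : b ∈ supp x
    · right
      have hlow : lowSet n m ⊆ supp x := by
        intro i hi
        simp only [lowSet, mem_filter, mem_univ, true_and] at hi
        exact hdc i b (Or.inr ⟨hi, hb⟩) hbx
      have hS : supp x = lowSet n m ∪ {b} := by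
        apply Finset.Subset.antisymm hsub
        intro i hi
        rcases Finset.mem_union.mp hi with h | h
        · exact hlow h
        · rwa [Finset.mem_singleton.mp h]
      rw [eq_ind_supp x, hS]
    · left
      intro i hi
      rcases Finset.mem_union.mp (hsub hi) with h | h
      · exact h
      · exact absurd (Finset.mem_singleton.mp h ▸ hi) hbx
  · rintro (h | h)
    · constructor
      · intro i j hij hj
        rcases hij with rfl | ⟨hi, hjm⟩
        · exact hj
        · have := h hj
          simp only [lowSet, mem_filter, mem_univ, true_and] at this
          omega
      · exact h.trans Finset.subset_union_left
    · subst h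
      rw [supp_ind]
      constructor
      · intro i j hij hj
        rcases hij with rfl | ⟨hi, _⟩
        · exact hj
        · apply Finset.mem_union_left
          simp [lowSet, hi]
      · exact Finset.Subset.refl _

theorem geo_sum : ∀ k : ℕ, ∑ i ∈ Finset.range k, 2 ^ i = 2 ^ k - 1 := by
  intro k
  induction k with
  | zero => simp
  | succ k ih =>
    rw [Finset.sum_range_succ, ih, pow_succ]
    have : 1 ≤ 2 ^ k := Nat.one_le_two_pow
    omega

theorem griesmer_sum {m : ℕ} (hm : 2 ≤ m) (hn : m + 2 ≤ n) :
    2 ^ n - 2 ^ m - 2 <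
      ∑ i ∈ Finset.range n, (2 ^ (n - 1) - 2 ^ (m - 1) - 1 + 2 ^ i - 1) / 2 ^ i := by
  set c : ℕ := 2 ^ (n - 1) - 2 ^ (m - 1) - 1 with hc
  have hmn1 : 2 ^ (m - 1) < 2 ^ (n - 1) :=
    Nat.pow_lt_pow_right (by norm_num) (by omega)
  -- split off the i = 0 term
  have hsum : ∑ i ∈ Finset.range n, (c + 2 ^ i - 1) / 2 ^ i
      = (∑ i ∈ Finset.range (n - 1), (c + 2 ^ (i + 1) - 1) / 2 ^ (i + 1)) + c := by
    rw [show n = (n - 1) + 1 by omega, Finset.sum_range_succ']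
    simp
  -- pointwise lower bound for the remaining terms
  have hterm : ∀ i ∈ Finset.range (n - 1),
      2 ^ (n - 2 - i) - (if i < m - 1 then 2 ^ (m - 2 - i) else 0)
        ≤ (c + 2 ^ (i + 1) - 1) / 2 ^ (i + 1) := by
    intro i hi
    rw [Finset.mem_range] at hi
    rw [Nat.le_div_iff_mul_le (Nat.pow_pos (by norm_num))]
    have h2i : 2 ≤ 2 ^ (i + 1) := by
      have : 2 ^ 1 ≤ 2 ^ (i + 1) := Nat.pow_le_pow_right (by norm_num) (by omega)
      simpa using this
    by_cases him : i < m - 1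
    · rw [if_pos him, Nat.sub_mul]
      have e1 : 2 ^ (n - 2 - i) * 2 ^ (i + 1) = 2 ^ (n - 1) := by
        rw [← pow_add]; congr 1; omega
      have e2 : 2 ^ (m - 2 - i) * 2 ^ (i + 1) = 2 ^ (m - 1) := by
        rw [← pow_add]; congr 1; omega
      rw [e1, e2]
      omega
    · rw [if_neg him, Nat.sub_zero]
      have e1 : 2 ^ (n - 2 - i) * 2 ^ (i + 1) = 2 ^ (n - 1) := by
        rw [← pow_add]; congr 1; omega
      rw [e1]
      have hmi : 2 ^ m ≤ 2 ^ (i + 1) := Nat.pow_le_pow_right (by norm_num) (by omega)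
      have hm2 : 2 ^ m = 2 * 2 ^ (m - 1) := by
        rw [← pow_succ']; congr 1; omega
      have hm3 : 2 ≤ 2 ^ (m - 1) := by
        have : 2 ^ 1 ≤ 2 ^ (m - 1) := Nat.pow_le_pow_right (by norm_num) (by omega)
        simpa using this
      omega
  -- sum of the lower bounds
  have hx : ∑ i ∈ Finset.range (n - 1), 2 ^ (n - 2 - i) = 2 ^ (n - 1) - 1 := by
    have hr := Finset.sum_range_reflect (fun j => 2 ^ j) (n - 1)
    rw [geo_sum] at hr
    rw [← hr]
    apply Finset.sum_congr rfl
    intro i hi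
    rw [Finset.mem_range] at hi
    congr 1 <;> omega
  have hy : ∑ i ∈ Finset.range (n - 1), (if i < m - 1 then 2 ^ (m - 2 - i) else 0)
      = 2 ^ (m - 1) - 1 := by
    rw [← Finset.sum_subset (Finset.range_subset_range.mpr (show m - 1 ≤ n - 1 by omega))
      (fun x _ hx => by rw [Finset.mem_range] at hx; rw [if_neg hx])]
    rw [show ∑ i ∈ Finset.range (m - 1), (if i < m - 1 then 2 ^ (m - 2 - i) else 0)
        = ∑ i ∈ Finset.range (m - 1), 2 ^ (m - 1 - 1 - i) from
      Finset.sum_congr rfl (fun i hi => by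
        rw [Finset.mem_range] at hi; rw [if_pos hi]; congr 1 <;> omega)]
    rw [Finset.sum_range_reflect (fun j => 2 ^ j) (m - 1), geo_sum]
  have hL : ∑ i ∈ Finset.range (n - 1),
      (2 ^ (n - 2 - i) - (if i < m - 1 then 2 ^ (m - 2 - i) else 0))
      = (2 ^ (n - 1) - 1) - (2 ^ (m - 1) - 1) := by
    rw [← hx, ← hy]
    rw [eq_tsub_iff_add_eq_of_le (Finset.sum_le_sum (fun i hi => by
      split
      · exact Nat.pow_le_pow_right (by norm_num) (by omega)
      · exact Nat.zero_le _))]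
    rw [← Finset.sum_add_distrib]
    apply Finset.sum_congr rfl
    intro i hi
    have : (if i < m - 1 then 2 ^ (m - 2 - i) else 0) ≤ 2 ^ (n - 2 - i) := by
      split
      · exact Nat.pow_le_pow_right (by norm_num) (by omega)
      · exact Nat.zero_le _
    omega
  have hge := Finset.sum_le_sum hterm
  rw [hL] at hge
  have hn2 : 2 ^ n = 2 * 2 ^ (n - 1) := by rw [← pow_succ']; congr 1; omega
  have hm2' : 2 ^ m = 2 * 2 ^ (m - 1) := by rw [← pow_succ']; congr 1; omega
  have hm3 : 2 ≤ 2 ^ (m - 1) := by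
    have : 2 ^ 1 ≤ 2 ^ (m - 1) := Nat.pow_le_pow_right (by norm_num) (by omega)
    simpa using this
  omega

end Aux
/-- **Theorem 6.2 (optimality).**  For `1 < m ≤ n−2` and distinct singletons
`B₁, B₂ ⊆ [n]∖[m]`, the code `C_D` built from the ideals `[m]∪B₁`, `[m]∪B₂` of
`ℍ(m,n)` has length `|D| = 2ⁿ − 2^m − 2`, dimension `n` (the map `u ↦ c_{D,u}` is
injective), minimum nonzero codeword weight `d = 2^{n−1} − 2^{m−1} − 2`, and
`Σ_{i=0}^{n−1} ⌈(d+1)/2ⁱ⌉ > 2ⁿ − 2^m − 2`, so by the Griesmer bound `C_D` is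
distance-optimal. -/
theorem stmt_15 (n m : ℕ) (hm : 1 < m) (hmn : m ≤ n - 2)
    (B₁ B₂ : Finset (Fin n))
    (hB₁ : ∀ j ∈ B₁, m ≤ (j : ℕ)) (hB₂ : ∀ j ∈ B₂, m ≤ (j : ℕ))
    (hB₁card : B₁.card = 1) (hB₂card : B₂.card = 1) (hBne : B₁ ≠ B₂)
    (D : Finset (Fin n → ZMod 2))
    (hD : D = Finset.univ.filter (fun x =>
      ¬ (HDownClosed n m (supp x) ∧
          (supp x ⊆ lowSet n m ∪ B₁ ∨ supp x ⊆ lowSet n m ∪ B₂)))) :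
    D.card = 2 ^ n - 2 ^ m - 2
    ∧ (∀ u₁ u₂ : Fin n → ZMod 2, (∀ x ∈ D, ip u₁ x = ip u₂ x) → u₁ = u₂)
    ∧ (∀ u : Fin n → ZMod 2, wtD D u ≠ 0 →
        2 ^ (n - 1) - 2 ^ (m - 1) - 2 ≤ wtD D u)
    ∧ (∃ u : Fin n → ZMod 2, wtD D u = 2 ^ (n - 1) - 2 ^ (m - 1) - 2)
    ∧ 2 ^ n - 2 ^ m - 2 <
        ∑ i ∈ Finset.range n, (2 ^ (n - 1) - 2 ^ (m - 1) - 1 + 2 ^ i - 1) / 2 ^ i := by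
  obtain ⟨b₁, rfl⟩ := Finset.card_eq_one.mp hB₁card
  obtain ⟨b₂, rfl⟩ := Finset.card_eq_one.mp hB₂card
  have hb₁ : m ≤ (b₁ : ℕ) := hB₁ b₁ (Finset.mem_singleton_self _)
  have hb₂ : m ≤ (b₂ : ℕ) := hB₂ b₂ (Finset.mem_singleton_self _)
  have hbne : b₁ ≠ b₂ := fun h => hBne (by rw [h])
  have hnm : m + 2 ≤ n := by omega
  -- power facts
  have hp1 : 2 ^ n = 4 * 2 ^ (n - 2) := by
    have h := pow_add 2 (n - 2) 2
    rw [show n - 2 + 2 = n by omega] at h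
    rw [h]; ring
  have hp2 : 2 ^ (n - 1) = 2 * 2 ^ (n - 2) := by
    have h := pow_add 2 (n - 2) 1
    rw [show n - 2 + 1 = n - 1 by omega] at h
    rw [h]; ring
  have hp3 : 2 ^ m ≤ 2 ^ (n - 2) := Nat.pow_le_pow_right (by norm_num) hmn
  have hp4 : 2 ^ m = 2 * 2 ^ (m - 1) := by
    have h := pow_add 2 (m - 1) 1
    rw [show m - 1 + 1 = m by omega] at h
    rw [h]; ring
  have hp6 : 4 ≤ 2 ^ (n - 2) := by
    have : 2 ^ 2 ≤ 2 ^ (n - 2) := Nat.pow_le_pow_right (by norm_num) (by omega)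
    simpa using this
  have hcu : (Finset.univ : Finset (Fin n → ZMod 2)).card = 2 ^ n := by
    simp [card_univ]
  -- the excluded set
  set x₁ : Fin n → ZMod 2 := ind (lowSet n m ∪ {b₁}) with hx₁
  set x₂ : Fin n → ZMod 2 := ind (lowSet n m ∪ {b₂}) with hx₂
  set Qp : (Fin n → ZMod 2) → Prop := fun x =>
    HDownClosed n m (supp x) ∧
      (supp x ⊆ lowSet n m ∪ {b₁} ∨ supp x ⊆ lowSet n m ∪ {b₂}) with hQp
  have hDQ : D = Finset.univ.filter (fun x => ¬ Qp x) := hD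
  set E₀ : Finset (Fin n → ZMod 2) := Finset.univ.filter (fun x => supp x ⊆ lowSet n m)
    with hE₀
  have hQchar : ∀ x, Qp x ↔ (supp x ⊆ lowSet n m ∨ x = x₁ ∨ x = x₂) := by
    intro x
    have h1 := charQ b₁ hb₁ x
    have h2 := charQ b₂ hb₂ x
    rw [hQp]
    constructor
    · rintro ⟨hdc, h | h⟩
      · rcases h1.mp ⟨hdc, h⟩ with h' | h'
        · exact Or.inl h'
        · exact Or.inr (Or.inl h')
      · rcases h2.mp ⟨hdc, h⟩ with h' | h'
        · exact Or.inl h'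
        · exact Or.inr (Or.inr h')
    · rintro (h | h | h)
      · exact ⟨(h1.mpr (Or.inl h)).1, Or.inl (h1.mpr (Or.inl h)).2⟩
      · exact ⟨(h1.mpr (Or.inr h)).1, Or.inl (h1.mpr (Or.inr h)).2⟩
      · exact ⟨(h2.mpr (Or.inr h)).1, Or.inr (h2.mpr (Or.inr h)).2⟩
  set Qs : Finset (Fin n → ZMod 2) := Finset.univ.filter Qp with hQs
  have hQseq : Qs = E₀ ∪ {x₁, x₂} := by
    ext x
    simp only [hQs, hE₀, Finset.mem_filter, Finset.mem_univ, true_and, Finset.mem_union,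
      Finset.mem_insert, Finset.mem_singleton]
    exact hQchar x
  -- basic facts about x₁, x₂, E₀
  have hx1E : x₁ ∉ E₀ := by
    simp only [hE₀, Finset.mem_filter, Finset.mem_univ, true_and]
    intro h
    have hb : b₁ ∈ supp x₁ := by
      rw [hx₁, supp_ind]
      exact Finset.mem_union_right _ (Finset.mem_singleton_self _)
    have := h hb
    simp only [lowSet, Finset.mem_filter, Finset.mem_univ, true_and] at this
    omega
  have hx2E : x₂ ∉ E₀ := by
    simp only [hE₀, Finset.mem_filter, Finset.mem_univ, true_and]
    intro h
    have hb : b₂ ∈ supp x₂ := by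
      rw [hx₂, supp_ind]
      exact Finset.mem_union_right _ (Finset.mem_singleton_self _)
    have := h hb
    simp only [lowSet, Finset.mem_filter, Finset.mem_univ, true_and] at this
    omega
  have hx12 : x₁ ≠ x₂ := by
    intro h
    have h1 : x₁ b₂ = 0 := by
      rw [hx₁]
      simp only [ind, Finset.mem_union, Finset.mem_singleton]
      rw [if_neg]
      rintro (hc | hc)
      · simp only [lowSet, Finset.mem_filter, Finset.mem_univ, true_and] at hc; omega
      · exact hbne hc.symm
    have h2 : x₂ b₂ = 1 := by
      rw [hx₂]
      simp only [ind]
      rw [if_pos (Finset.mem_union_right _ (Finset.mem_singleton_self _))]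
    rw [h] at h1
    rw [h1] at h2
    exact absurd h2 (by decide)
  have hE₀card : E₀.card = 2 ^ m := by
    have hEpi : E₀ = Fintype.piFinset
        (fun i : Fin n => if (i : ℕ) < m then (Finset.univ : Finset (ZMod 2)) else {0}) := by
      ext x
      simp only [hE₀, Finset.mem_filter, Finset.mem_univ, true_and, Fintype.mem_piFinset]
      constructor
      · intro h i
        by_cases hi : (i : ℕ) < m
        · rw [if_pos hi]; exact Finset.mem_univ _
        · rw [if_neg hi, Finset.mem_singleton]
          by_contra hc
          have := h (by rw [mem_supp]; exact hc)
          simp only [lowSet, Finset.mem_filter, Finset.mem_univ, true_and] at this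
          omega
      · intro h i hi
        rw [mem_supp] at hi
        simp only [lowSet, Finset.mem_filter, Finset.mem_univ, true_and]
        by_contra hc
        have := h i
        rw [if_neg hc, Finset.mem_singleton] at this
        exact hi this
    rw [hEpi, Fintype.card_piFinset]
    have : ∀ i : Fin n,
        ((if (i : ℕ) < m then (Finset.univ : Finset (ZMod 2)) else {0}).card)
        = if (i : ℕ) < m then 2 else 1 := by
      intro i; by_cases hi : (i : ℕ) < m <;> simp [hi]
    rw [Finset.prod_congr rfl (fun i _ => this i)]
    rw [Finset.prod_ite, Finset.prod_const, Finset.prod_const, one_pow, mul_one]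
    rw [show Finset.filter (fun i : Fin n => (i : ℕ) < m) Finset.univ = lowSet n m from rfl]
    rw [lowSet_card (by omega)]
  have hdisj : Disjoint E₀ ({x₁, x₂} : Finset (Fin n → ZMod 2)) := by
    rw [Finset.disjoint_right]
    intro x hx
    rcases Finset.mem_insert.mp hx with rfl | hx'
    · exact hx1E
    · rw [Finset.mem_singleton] at hx'; subst hx'; exact hx2E
  have hQscard : Qs.card = 2 ^ m + 2 := by
    rw [hQseq, Finset.card_union_of_disjoint hdisj, hE₀card, Finset.card_pair hx12]
  have hsplitall := Finset.card_filter_add_card_filter_not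
    (s := (Finset.univ : Finset (Fin n → ZMod 2))) (p := Qp)
  rw [hcu] at hsplitall
  have hDcard : D.card = 2 ^ n - 2 ^ m - 2 := by
    rw [hDQ]
    have : (Finset.univ.filter Qp).card = 2 ^ m + 2 := hQscard
    omega
  -- closure of univ and E₀ under the flip involution
  have hclosE₀ : ∀ i₀ : Fin n, (i₀ : ℕ) < m → ∀ x ∈ E₀,
      (x + fun j => if j = i₀ then 1 else 0) ∈ E₀ := by
    intro i₀ hi₀ x hx
    simp only [hE₀, Finset.mem_filter, Finset.mem_univ, true_and] at hx ⊢
    intro i hi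
    rw [mem_supp] at hi
    simp only [lowSet, Finset.mem_filter, Finset.mem_univ, true_and]
    by_contra hc
    have hne : i ≠ i₀ := by
      intro h; subst h; omega
    simp only [Pi.add_apply, if_neg hne, add_zero] at hi
    have := hx (by rw [mem_supp]; exact hi)
    simp only [lowSet, Finset.mem_filter, Finset.mem_univ, true_and] at this
    omega
  -- decomposition of the weight
  have hwt : ∀ u : Fin n → ZMod 2,
      (Qs.filter (fun x => ip u x = 1)).card + wtD D u
        = (Finset.univ.filter (fun x => ip u x = 1)).card := by
    intro u
    have e1 : Qs.filter (fun x => ip u x = 1)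
        = (Finset.univ.filter (fun x => ip u x = 1)).filter Qp := by
      rw [hQs, Finset.filter_comm]
    have e2 : D.filter (fun x => ip u x = 1)
        = (Finset.univ.filter (fun x => ip u x = 1)).filter (fun x => ¬ Qp x) := by
      rw [hDQ, Finset.filter_comm]
    have := Finset.card_filter_add_card_filter_not
      (s := Finset.univ.filter (fun x => ip u x = 1)) (p := Qp)
    rw [← e1, ← e2] at this
    exact this
  -- the full count for u ≠ 0
  have hfull : ∀ u : Fin n → ZMod 2, u ≠ 0 →
      (Finset.univ.filter (fun x => ip u x = 1)).card = 2 ^ (n - 2) * 2 := by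
    intro u hu
    have : ∃ i₀ : Fin n, u i₀ = 1 := by
      by_contra hc
      push_neg at hc
      exact hu (funext fun i => zmod2_ne_one (hc i))
    obtain ⟨i₀, hi₀⟩ := this
    have := half_count u i₀ hi₀ Finset.univ (fun x _ => Finset.mem_univ _)
    rw [hcu] at this
    omega
  -- bound on the E₀ part
  have hE₀bound : ∀ u : Fin n → ZMod 2,
      (E₀.filter (fun x => ip u x = 1)).card ≤ 2 ^ (m - 1) := by
    intro u
    by_cases hv : ∃ i₀ : Fin n, (i₀ : ℕ) < m ∧ u i₀ = 1
    · obtain ⟨i₀, hi₀m, hi₀⟩ := hv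
      have := half_count u i₀ hi₀ E₀ (hclosE₀ i₀ hi₀m)
      rw [hE₀card] at this
      omega
    · push_neg at hv
      have : E₀.filter (fun x => ip u x = 1) = ∅ := by
        apply Finset.filter_false_of_mem
        intro x hx
        simp only [hE₀, Finset.mem_filter, Finset.mem_univ, true_and] at hx
        have : ip u x = 0 := by
          rw [ip]
          apply Finset.sum_eq_zero
          intro i _
          by_cases hi : (i : ℕ) < m
          · rw [zmod2_ne_one (hv i hi), zero_mul]
          · have : x i = 0 := by
              by_contra hc
              have := hx (by rw [mem_supp]; exact hc)
              simp only [lowSet, Finset.mem_filter, Finset.mem_univ, true_and] at this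
              omega
            rw [this, mul_zero]
        rw [this]; decide
      rw [this, Finset.card_empty]
      exact Nat.zero_le _
  -- bound on the Qs part
  have hQsbound : ∀ u : Fin n → ZMod 2,
      (Qs.filter (fun x => ip u x = 1)).card ≤ 2 ^ (m - 1) + 2 := by
    intro u
    rw [hQseq, Finset.filter_union]
    calc ((E₀.filter (fun x => ip u x = 1)) ∪
          (({x₁, x₂} : Finset _).filter (fun x => ip u x = 1))).card
        ≤ (E₀.filter (fun x => ip u x = 1)).card
          + (({x₁, x₂} : Finset _).filter (fun x => ip u x = 1)).card :=
          Finset.card_union_le _ _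
      _ ≤ 2 ^ (m - 1) + 2 := by
          have h1 := hE₀bound u
          have h2 : (({x₁, x₂} : Finset (Fin n → ZMod 2)).filter
              (fun x => ip u x = 1)).card ≤ 2 := by
            calc (({x₁, x₂} : Finset (Fin n → ZMod 2)).filter (fun x => ip u x = 1)).card
                ≤ ({x₁, x₂} : Finset (Fin n → ZMod 2)).card := Finset.card_filter_le _ _
              _ = 2 := Finset.card_pair hx12
          omega
  refine ⟨hDcard, ?_, ?_, ?_, griesmer_sum (by omega) hnm⟩
  · -- injectivity
    intro u₁ u₂ h
    by_contra hne
    have hw : u₁ + u₂ ≠ 0 := by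
      intro h0
      apply hne
      funext i
      exact zmod2_add_eq_zero (congrFun h0 i)
    have hsub : Finset.univ.filter (fun x => ip (u₁ + u₂) x = 1) ⊆ Qs := by
      intro x hx
      simp only [Finset.mem_filter, Finset.mem_univ, true_and] at hx
      rw [hQs, Finset.mem_filter]
      refine ⟨Finset.mem_univ _, ?_⟩
      by_contra hc
      have hxD : x ∈ D := by
        rw [hDQ, Finset.mem_filter]
        exact ⟨Finset.mem_univ _, hc⟩
      have := h x hxD
      rw [ip_addl] at hx
      rw [this] at hx
      have : ∀ a : ZMod 2, a + a ≠ 1 := by decide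
      exact this _ hx
    have hle := Finset.card_le_card hsub
    rw [hfull _ hw, hQscard] at hle
    omega
  · -- minimum weight bound
    intro u hu
    have hu0 : u ≠ 0 := by
      intro h0
      apply hu
      rw [h0, wtD]
      rw [Finset.filter_false_of_mem, Finset.card_empty]
      intro x _
      rw [ip_zero]
      decide
    have h1 := hwt u
    have h2 := hfull u hu0
    have h3 := hQsbound u
    have hd1 : 2 ^ (m - 1) ≤ 2 ^ (n - 2) := Nat.pow_le_pow_right (by norm_num) (by omega)
    omega
  · -- existence of a minimum-weight word
    have hn0 : 0 < n := by omega
    set i0 : Fin n := ⟨0, hn0⟩ with hi0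
    set u₀ : Fin n → ZMod 2 := fun j => if j = i0 then 1 else 0 with hu₀
    have hu₀i : u₀ i0 = 1 := by rw [hu₀]; simp
    have hi0m : (i0 : ℕ) < m := by simp [hi0]; omega
    refine ⟨u₀, ?_⟩
    have hfullu : (Finset.univ.filter (fun x => ip u₀ x = 1)).card = 2 ^ (n - 2) * 2 := by
      apply hfull
      intro h0
      have := congrFun h0 i0
      rw [hu₀i, Pi.zero_apply] at this
      exact absurd this (by decide)
    have hE₀u : (E₀.filter (fun x => ip u₀ x = 1)).card * 2 = 2 ^ m := by
      have := half_count u₀ i0 hu₀i E₀ (hclosE₀ i0 hi0m)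
      rw [hE₀card] at this
      omega
    have hpx₁ : ip u₀ x₁ = 1 := by
      rw [hu₀, ip_single', hx₁]
      simp only [ind]
      rw [if_pos]
      apply Finset.mem_union_left
      simp only [lowSet, Finset.mem_filter, Finset.mem_univ, true_and]
      exact hi0m
    have hpx₂ : ip u₀ x₂ = 1 := by
      rw [hu₀, ip_single', hx₂]
      simp only [ind]
      rw [if_pos]
      apply Finset.mem_union_left
      simp only [lowSet, Finset.mem_filter, Finset.mem_univ, true_and]
      exact hi0m
    have hpairfil : ({x₁, x₂} : Finset (Fin n → ZMod 2)).filter (fun x => ip u₀ x = 1)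
        = {x₁, x₂} := by
      apply Finset.filter_true_of_mem
      intro x hx
      rcases Finset.mem_insert.mp hx with rfl | hx'
      · exact hpx₁
      · rw [Finset.mem_singleton] at hx'; subst hx'; exact hpx₂
    have hQsu : (Qs.filter (fun x => ip u₀ x = 1)).card
        = (E₀.filter (fun x => ip u₀ x = 1)).card + 2 := by
      rw [hQseq, Finset.filter_union, hpairfil]
      rw [Finset.card_union_of_disjoint
        (Finset.disjoint_of_subset_left (Finset.filter_subset _ _) hdisj)]
      rw [Finset.card_pair hx12]
    have h1 := hwt u₀
    rw [hfullu, hQsu] at h1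
    have hd1 : 2 ^ (m - 1) ≤ 2 ^ (n - 2) := Nat.pow_le_pow_right (by norm_num) (by omega)
    omega
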